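/- For points in the standard 2-dimensional simplex Δ = {x ∈ ℝ³ : x ≥ 0, x_1 + x_2 + x_3 = 1}, define for each i ∈ {1,2,3} (indices mod 3) the relation u ≤_i v iff u = v, or (u_{i-1} < v_{i-1} and u_{i+1} < v_{i+1}). If S ⊆ Δ is a finite set of at least 4 points that is an antichain in each of the three partial orders ≤_1, ≤_2, ≤_3, then there exists an index i ∈ {1,2,3} and a constant c such that u_i = c for all u ∈ S. -/

import Mathlib

lemma fin3_cases : ∀ i a : Fin 3, a = i ∨ a = i + 1 ∨ a = i + 2 := by decide
lemma fin3_e1 : ∀ i : Fin 3, i + 1 + 1 = i + 2 := by decide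
lemma fin3_e2 : ∀ i : Fin 3, i + 1 + 2 = i := by decide
lemma fin3_e3 : ∀ i : Fin 3, i + 2 + 1 = i := by decide
lemma fin3_e4 : ∀ i : Fin 3, i + 2 + 2 = i + 1 := by decide

lemma one_eq (u v : Fin 3 → ℝ) (hne : u ≠ v)
    (hsum : u 0 + u 1 + u 2 = v 0 + v 1 + v 2)
    (h : ∀ i : Fin 3, ¬(u (i - 1) < v (i - 1) ∧ u (i + 1) < v (i + 1)))
    (h' : ∀ i : Fin 3, ¬(v (i - 1) < u (i - 1) ∧ v (i + 1) < u (i + 1))) :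
    ∃ i : Fin 3, u i = v i ∧ u (i + 1) ≠ v (i + 1) ∧ u (i + 2) ≠ v (i + 2) := by
  have n21 := h 0; have n02 := h 1; have n10 := h 2
  have m21 := h' 0; have m02 := h' 1; have m10 := h' 2
  simp only [show (0:Fin 3) - 1 = 2 from rfl, show (0:Fin 3) + 1 = 1 from rfl,
    show (1:Fin 3) - 1 = 0 from rfl, show (1:Fin 3) + 1 = 2 from rfl,
    show (2:Fin 3) - 1 = 1 from rfl, show (2:Fin 3) + 1 = 0 from rfl] at n21 n02 n10 m21 m02 m10
  rcases lt_trichotomy (u 0) (v 0) with h0 | h0 | h0 <;>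
    rcases lt_trichotomy (u 1) (v 1) with h1 | h1 | h1 <;>
    rcases lt_trichotomy (u 2) (v 2) with h2 | h2 | h2

  · exact absurd ⟨h1, h0⟩ n10
  · exact absurd ⟨h1, h0⟩ n10
  · exact absurd ⟨h1, h0⟩ n10
  · exact absurd ⟨h0, h2⟩ n02
  · exfalso; linarith
  · exact ⟨1, h1, h2.ne', h0.ne⟩
  · exact absurd ⟨h0, h2⟩ n02
  · exact ⟨2, h2, h0.ne, h1.ne'⟩
  · exact absurd ⟨h2, h1⟩ m21
  · exact absurd ⟨h2, h1⟩ n21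
  · exfalso; linarith
  · exact ⟨0, h0, h1.ne, h2.ne'⟩
  · exfalso; linarith
  · exact absurd (funext fun j => by fin_cases j <;> assumption) hne
  · exfalso; linarith
  · exact ⟨0, h0, h1.ne', h2.ne⟩
  · exfalso; linarith
  · exact absurd ⟨h2, h1⟩ m21
  · exact absurd ⟨h2, h1⟩ n21
  · exact ⟨2, h2, h0.ne', h1.ne⟩
  · exact absurd ⟨h0, h2⟩ m02
  · exact ⟨1, h1, h2.ne, h0.ne'⟩
  · exfalso; linarith
  · exact absurd ⟨h0, h2⟩ m02
  · exact absurd ⟨h1, h0⟩ m10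
  · exact absurd ⟨h1, h0⟩ m10
  · exact absurd ⟨h1, h0⟩ m10


/-- Membership in the standard 2-dimensional simplex in `ℝ³`. -/
def InSimplex (x : Fin 3 → ℝ) : Prop :=
  (∀ j, 0 ≤ x j) ∧ x 0 + x 1 + x 2 = 1

/-- The relation `u ≤_i v`: `u = v`, or both coordinates other than `i` of `u`
are strictly smaller than those of `v` (indices cyclic in `Fin 3`). -/
def LeI (i : Fin 3) (u v : Fin 3 → ℝ) : Prop :=
  u = v ∨ (u (i - 1) < v (i - 1) ∧ u (i + 1) < v (i + 1))

/-- a finite set of at least 4 points of the simplex that is an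
antichain in each of the three orders `≤_1, ≤_2, ≤_3` has a constant `i`-th
coordinate for some `i`. -/
lemma sum_cyc (x : Fin 3 → ℝ) (hx : InSimplex x) (i : Fin 3) :
    x i + x (i + 1) + x (i + 2) = 1 := by
  fin_cases i <;> simpa using by linarith [hx.2]

lemma aux4 (u v w z : Fin 3 → ℝ) (i : Fin 3)
    (su : u i + u (i+1) + u (i+2) = 1) (sv : v i + v (i+1) + v (i+2) = 1)
    (sw : w i + w (i+1) + w (i+2) = 1) (sz : z i + z (i+1) + z (i+2) = 1)
    (huv : u i = v i) (huv1 : u (i+1) ≠ v (i+1)) (huv2 : u (i+2) ≠ v (i+2))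
    (hw1 : w (i+1) = u (i+1)) (hw2 : w (i+2) = v (i+2)) (hwi : w i ≠ u i)
    (pzu : ∃ a : Fin 3, z a = u a ∧ z (a+1) ≠ u (a+1) ∧ z (a+2) ≠ u (a+2))
    (pzv : ∃ b : Fin 3, z b = v b ∧ z (b+1) ≠ v (b+1) ∧ z (b+2) ≠ v (b+2))
    (pzw : ∃ c : Fin 3, z c = w c ∧ z (c+1) ≠ w (c+1) ∧ z (c+2) ≠ w (c+2)) :
    False := by
  obtain ⟨a, ha, ha1, ha2⟩ := pzu
  rcases fin3_cases i a with h | rfl | rfl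
  · -- a = i : z i = u i
    rw [h] at ha ha1 ha2
    obtain ⟨c, hc, hc1, hc2⟩ := pzw
    rcases fin3_cases i c with h' | rfl | rfl
    · rw [h'] at hc hc1 hc2
      exact hwi (hc.symm.trans ha)
    · simp only [fin3_e1, fin3_e2] at hc1 hc2
      exact ha1 (hc.trans hw1)
    · simp only [fin3_e3, fin3_e4] at hc1 hc2
      obtain ⟨b, hb, hb1, hb2⟩ := pzv
      rcases fin3_cases i b with h'' | rfl | rfl
      · rw [h''] at hb hb1 hb2
        exact hb2 (hc.trans hw2)
      · simp only [fin3_e1, fin3_e2] at hb1 hb2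
        exact hb1 (hc.trans hw2)
      · simp only [fin3_e3, fin3_e4] at hb1 hb2
        exact hb1 (ha.trans huv)
  · -- a = i+1 : z (i+1) = u (i+1)
    simp only [fin3_e1, fin3_e2] at ha1 ha2
    obtain ⟨b, hb, hb1, hb2⟩ := pzv
    rcases fin3_cases i b with h' | rfl | rfl
    · rw [h'] at hb hb1 hb2
      exact ha2 (hb.trans huv.symm)
    · simp only [fin3_e1, fin3_e2] at hb1 hb2
      exact huv1 (ha.symm.trans hb)
    · simp only [fin3_e3, fin3_e4] at hb1 hb2
      obtain ⟨c, hc, hc1, hc2⟩ := pzw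
      rcases fin3_cases i c with h'' | rfl | rfl
      · rw [h''] at hc hc1 hc2
        exact hc1 (ha.trans hw1.symm)
      · simp only [fin3_e1, fin3_e2] at hc1 hc2
        exact hc1 (hb.trans hw2.symm)
      · simp only [fin3_e3, fin3_e4] at hc1 hc2
        exact hc2 (ha.trans hw1.symm)
  · -- a = i+2 : z (i+2) = u (i+2)
    simp only [fin3_e3, fin3_e4] at ha1 ha2
    obtain ⟨b, hb, hb1, hb2⟩ := pzv
    rcases fin3_cases i b with h' | rfl | rfl
    · rw [h'] at hb hb1 hb2
      exact ha1 (hb.trans huv.symm)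
    · simp only [fin3_e1, fin3_e2] at hb1 hb2
      obtain ⟨c, hc, hc1, hc2⟩ := pzw
      rcases fin3_cases i c with h'' | rfl | rfl
      · rw [h''] at hc hc1 hc2
        exact huv2 (by linarith)
      · simp only [fin3_e1, fin3_e2] at hc1 hc2
        exact ha2 (hc.trans hw1)
      · simp only [fin3_e3, fin3_e4] at hc1 hc2
        exact hb1 (hc.trans hw2)
    · simp only [fin3_e3, fin3_e4] at hb1 hb2
      exact huv2 (ha.symm.trans hb)

theorem triple_antichain_constant_coordinate (S : Finset (Fin 3 → ℝ))
    (hΔ : ∀ u ∈ S, InSimplex u) (hcard : 4 ≤ S.card)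
    (hanti : ∀ i : Fin 3, ∀ u ∈ S, ∀ v ∈ S, LeI i u v → u = v) :
    ∃ (i : Fin 3) (c : ℝ), ∀ u ∈ S, u i = c := by
  by_contra hcon
  push_neg at hcon
  have key : ∀ x ∈ S, ∀ y ∈ S, x ≠ y →
      ∃ m : Fin 3, x m = y m ∧ x (m+1) ≠ y (m+1) ∧ x (m+2) ≠ y (m+2) := by
    intro x hx y hy hxy
    exact one_eq x y hxy (by rw [(hΔ x hx).2, (hΔ y hy).2])
      (fun i hp => hxy (hanti i x hx y hy (Or.inr hp)))
      (fun i hp => hxy ((hanti i y hy x hx (Or.inr hp)).symm))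
  have hS2 : 1 < S.card := by omega
  obtain ⟨u, hu, v, hv, huvne⟩ := Finset.one_lt_card.mp hS2
  obtain ⟨i, e0, e1, e2⟩ := key u hu v hv huvne
  obtain ⟨w, hw, hwi⟩ := hcon i (u i)
  have hwu : w ≠ u := fun h => hwi (by rw [h])
  have hwv : w ≠ v := fun h => hwi (by rw [h, ← e0])
  have claim : ∀ z ∈ S, z = u ∨ z = v ∨ z = w := by
    obtain ⟨a, pa, pa1, pa2⟩ := key w hw u hu hwu
    rcases fin3_cases i a with h | rfl | rfl
    · rw [h] at pa pa1 pa2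
      exact absurd pa hwi
    · -- w (i+1) = u (i+1)
      simp only [fin3_e1, fin3_e2] at pa1 pa2
      obtain ⟨b, pb, pb1, pb2⟩ := key w hw v hv hwv
      rcases fin3_cases i b with h' | rfl | rfl
      · rw [h'] at pb pb1 pb2
        exact absurd (pb.trans e0.symm) hwi
      · simp only [fin3_e1, fin3_e2] at pb1 pb2
        exact absurd (pa.symm.trans pb) e1
      · simp only [fin3_e3, fin3_e4] at pb1 pb2
        intro z hz
        by_contra hno
        push_neg at hno
        exact aux4 u v w z i (sum_cyc u (hΔ u hu) i) (sum_cyc v (hΔ v hv) i)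
          (sum_cyc w (hΔ w hw) i) (sum_cyc z (hΔ z hz) i)
          e0 e1 e2 pa pb hwi
          (key z hz u hu hno.1) (key z hz v hv hno.2.1) (key z hz w hw hno.2.2)
    · -- w (i+2) = u (i+2)
      simp only [fin3_e3, fin3_e4] at pa1 pa2
      obtain ⟨b, pb, pb1, pb2⟩ := key w hw v hv hwv
      rcases fin3_cases i b with h' | rfl | rfl
      · rw [h'] at pb pb1 pb2
        exact absurd (pb.trans e0.symm) hwi
      · simp only [fin3_e1, fin3_e2] at pb1 pb2
        intro z hz
        by_contra hno
        push_neg at hno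
        exact aux4 v u w z i (sum_cyc v (hΔ v hv) i) (sum_cyc u (hΔ u hu) i)
          (sum_cyc w (hΔ w hw) i) (sum_cyc z (hΔ z hz) i)
          e0.symm (Ne.symm e1) (Ne.symm e2) pb pa (fun hh => hwi (hh.trans e0.symm))
          (key z hz v hv hno.2.1) (key z hz u hu hno.1) (key z hz w hw hno.2.2)
      · simp only [fin3_e3, fin3_e4] at pb1 pb2
        exact absurd (pa.symm.trans pb) e2
  have hsub : S ⊆ {u, v, w} := by
    intro z hz
    rcases claim z hz with rfl | rfl | rfl <;> simp
  have hle := Finset.card_le_card hsub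
  have h3 : ({u, v, w} : Finset (Fin 3 → ℝ)).card ≤ 3 :=
    le_trans (Finset.card_insert_le _ _)
      (by have := Finset.card_insert_le v ({w} : Finset (Fin 3 → ℝ)); rw [Finset.card_singleton] at this; omega)
  omega
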